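/- arXiv:2012.14725 — 3 statements merged into one kernel-verified Lean document; each statement's English description precedes it below -/
import Mathlib

section
/- Let M = φK_θ ⊕ ψK_θ be an orthogonal direct sum in L²(𝕋) with θ inner and φ, ψ unimodular. The antilinear operator C_M defined on L² by C_M f = θφψ z̄ f̄ is a conjugation on L² (an antilinear isometric involution), and C_M maps M into M. -/
open MeasureTheory Complex Submodule

noncomputable section

namespace DualBand

/-- Haar (normalized Lebesgue) measure on the unit circle, realized additively. -/
abbrev μ : Measure UnitAddCircle := AddCircle.haarAddCircle

/-- The Lebesgue space L² of the unit circle. -/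
abbrev L2 : Type := Lp ℂ 2 μ

lemma mul_memLp (φ : UnitAddCircle →ₘ[μ] ℂ) (hφ : ∀ᵐ x ∂μ, ‖φ x‖ = 1) (f : L2) :
    MemLp (fun x => φ x * f x) 2 μ := by
  refine ⟨φ.aestronglyMeasurable.mul (Lp.aestronglyMeasurable f), ?_⟩
  have h : eLpNorm (fun x => φ x * f x) 2 μ = eLpNorm f 2 μ := by
    refine eLpNorm_congr_norm_ae ?_
    filter_upwards [hφ] with x hx
    simp [norm_mul, hx]
  rw [h]
  exact Lp.eLpNorm_lt_top f

/-- Multiplication by an a.e. unimodular measurable function, as a linear map on L². -/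
def mulOp (φ : UnitAddCircle →ₘ[μ] ℂ) (hφ : ∀ᵐ x ∂μ, ‖φ x‖ = 1) : L2 →ₗ[ℂ] L2 where
  toFun f := (mul_memLp φ hφ f).toLp _
  map_add' f g := by
    refine Lp.ext ?_
    filter_upwards [MemLp.coeFn_toLp (mul_memLp φ hφ (f + g)),
      MemLp.coeFn_toLp (mul_memLp φ hφ f), MemLp.coeFn_toLp (mul_memLp φ hφ g),
      Lp.coeFn_add f g,
      Lp.coeFn_add ((mul_memLp φ hφ f).toLp _) ((mul_memLp φ hφ g).toLp _)]
      with x h1 h2 h3 h4 h5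
    rw [h1, h5, Pi.add_apply, h2, h3, h4, Pi.add_apply]
    ring
  map_smul' c f := by
    refine Lp.ext ?_
    filter_upwards [MemLp.coeFn_toLp (mul_memLp φ hφ (c • f)),
      MemLp.coeFn_toLp (mul_memLp φ hφ f),
      Lp.coeFn_smul c f,
      Lp.coeFn_smul c ((mul_memLp φ hφ f).toLp _)]
      with x h1 h2 h3 h4
    rw [h1, RingHom.id_apply, h4, Pi.smul_apply, h2, h3, Pi.smul_apply]
    simp [smul_eq_mul]
    ring

/-- Complex conjugation of an a.e.-defined function. -/
def conjAE (φ : UnitAddCircle →ₘ[μ] ℂ) : UnitAddCircle →ₘ[μ] ℂ :=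
  AEEqFun.comp (starRingEnd ℂ) RCLike.continuous_conj φ

lemma conj_memLp (f : L2) : MemLp (fun x => (starRingEnd ℂ) (f x)) 2 μ := by
  refine ⟨RCLike.continuous_conj.comp_aestronglyMeasurable (Lp.aestronglyMeasurable f), ?_⟩
  have h : eLpNorm (fun x => (starRingEnd ℂ) (f x)) 2 μ = eLpNorm f 2 μ :=
    eLpNorm_congr_norm_ae (Filter.Eventually.of_forall fun x => by simp)
  rw [h]
  exact Lp.eLpNorm_lt_top f

/-- Pointwise complex conjugation on L². -/
def conjL2 (f : L2) : L2 := (conj_memLp f).toLp _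

/-- The conjugate z̄ of the coordinate function, as an a.e.-defined function. -/
def zbar : UnitAddCircle →ₘ[μ] ℂ :=
  AEEqFun.mk (⇑(fourier (T := 1) (-1)))
    ((fourier (T := 1) (-1)).continuous.aestronglyMeasurable)

/-- The Hardy space H² inside L², as the closed span of the nonnegative Fourier modes. -/
def H2 : Submodule ℂ L2 :=
  (Submodule.span ℂ (Set.range fun n : ℕ => (fourierLp 2 (n : ℤ) : L2))).topologicalClosure

/-- The model space K_θ = H² ⊖ θH². -/
def modelSpace (θ : UnitAddCircle →ₘ[μ] ℂ) (hθ : ∀ᵐ x ∂μ, ‖θ x‖ = 1) : Submodule ℂ L2 :=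
  H2 ⊓ (H2.map (mulOp θ hθ))ᗮ

lemma modelSpace_isClosed (θ : UnitAddCircle →ₘ[μ] ℂ) (hθ : ∀ᵐ x ∂μ, ‖θ x‖ = 1) :
    IsClosed ((modelSpace θ hθ : Set L2)) := by
  have h1 : (modelSpace θ hθ : Set L2)
      = (H2 : Set L2) ∩ ((H2.map (mulOp θ hθ))ᗮ : Set L2) := rfl
  rw [h1]
  exact (Submodule.isClosed_topologicalClosure _).inter
    (Submodule.isClosed_orthogonal (H2.map (mulOp θ hθ)))

instance (θ : UnitAddCircle →ₘ[μ] ℂ) (hθ : ∀ᵐ x ∂μ, ‖θ x‖ = 1) :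
    CompleteSpace (modelSpace θ hθ) :=
  (modelSpace_isClosed θ hθ).completeSpace_coe

section Aux

lemma conj_mul_self_one {z : ℂ} (h : ‖z‖ = 1) : (starRingEnd ℂ) z * z = 1 := by
  rw [RCLike.conj_mul, h]
  norm_num

lemma mulOp_coeFn (φ : UnitAddCircle →ₘ[μ] ℂ) (hφ : ∀ᵐ x ∂μ, ‖φ x‖ = 1) (f : L2) :
    mulOp φ hφ f =ᵐ[μ] fun x => φ x * f x := (mul_memLp φ hφ f).coeFn_toLp

lemma conjL2_coeFn (f : L2) : conjL2 f =ᵐ[μ] fun x => (starRingEnd ℂ) (f x) :=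
  (conj_memLp f).coeFn_toLp

/-- The antilinear operator f ↦ u · conj f. -/
def antiC (u : UnitAddCircle →ₘ[μ] ℂ) (hu : ∀ᵐ x ∂μ, ‖u x‖ = 1) (f : L2) : L2 :=
  mulOp u hu (conjL2 f)

lemma antiC_coeFn (u : UnitAddCircle →ₘ[μ] ℂ) (hu : ∀ᵐ x ∂μ, ‖u x‖ = 1) (f : L2) :
    antiC u hu f =ᵐ[μ] fun x => u x * (starRingEnd ℂ) (f x) := by
  filter_upwards [mulOp_coeFn u hu (conjL2 f), conjL2_coeFn f] with x h1 h2
  rw [antiC, h1, h2]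

lemma antiC_add (u : UnitAddCircle →ₘ[μ] ℂ) (hu : ∀ᵐ x ∂μ, ‖u x‖ = 1) (f g : L2) :
    antiC u hu (f + g) = antiC u hu f + antiC u hu g := by
  refine Lp.ext ?_
  filter_upwards [antiC_coeFn u hu (f + g), antiC_coeFn u hu f, antiC_coeFn u hu g,
    Lp.coeFn_add f g, Lp.coeFn_add (antiC u hu f) (antiC u hu g)] with x h1 h2 h3 h4 h5
  rw [h1, h5, Pi.add_apply, h2, h3, h4, Pi.add_apply, map_add]
  ring

lemma antiC_smul (u : UnitAddCircle →ₘ[μ] ℂ) (hu : ∀ᵐ x ∂μ, ‖u x‖ = 1) (c : ℂ) (f : L2) :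
    antiC u hu (c • f) = (starRingEnd ℂ) c • antiC u hu f := by
  refine Lp.ext ?_
  filter_upwards [antiC_coeFn u hu (c • f), antiC_coeFn u hu f,
    Lp.coeFn_smul c f, Lp.coeFn_smul ((starRingEnd ℂ) c) (antiC u hu f)] with x h1 h2 h3 h4
  rw [h1, h4, Pi.smul_apply, h2, h3, Pi.smul_apply, smul_eq_mul, smul_eq_mul, map_mul]
  ring

lemma antiC_inner (u : UnitAddCircle →ₘ[μ] ℂ) (hu : ∀ᵐ x ∂μ, ‖u x‖ = 1) (f g : L2) :
    inner (𝕜 := ℂ) (antiC u hu f) (antiC u hu g) = inner (𝕜 := ℂ) g f := by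
  rw [MeasureTheory.L2.inner_def, MeasureTheory.L2.inner_def]
  refine integral_congr_ae ?_
  filter_upwards [antiC_coeFn u hu f, antiC_coeFn u hu g, hu] with x h1 h2 h3
  rw [h1, h2, RCLike.inner_apply, RCLike.inner_apply]
  have h4 := conj_mul_self_one h3
  simp only [map_mul, Complex.conj_conj]
  linear_combination (f x * (starRingEnd ℂ) (g x)) * h4

end Aux
section Aux2

lemma zbar_coeFn : ⇑zbar =ᵐ[μ] fun x => fourier (T := 1) (-1) x := AEEqFun.coeFn_mk _ _

lemma norm_fourier (n : ℤ) (x : UnitAddCircle) : ‖fourier (T := 1) n x‖ = 1 := by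
  rw [fourier_apply]
  exact Circle.norm_coe _

lemma hz_unimod : ∀ᵐ x ∂μ, ‖zbar x‖ = 1 := by
  filter_upwards [zbar_coeFn] with x h
  rw [h, norm_fourier]

lemma antiC_norm (u : UnitAddCircle →ₘ[μ] ℂ) (hu : ∀ᵐ x ∂μ, ‖u x‖ = 1) (f : L2) :
    ‖antiC u hu f‖ = ‖f‖ := by
  have h1 := antiC_inner u hu f f
  have h2 : ‖antiC u hu f‖ = Real.sqrt (RCLike.re (inner (𝕜 := ℂ) (antiC u hu f) (antiC u hu f))) :=
    norm_eq_sqrt_re_inner _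
  have h3 : ‖f‖ = Real.sqrt (RCLike.re (inner (𝕜 := ℂ) f f)) := norm_eq_sqrt_re_inner _
  rw [h2, h1, h3]

lemma antiC_sub (u : UnitAddCircle →ₘ[μ] ℂ) (hu : ∀ᵐ x ∂μ, ‖u x‖ = 1) (f g : L2) :
    antiC u hu (f - g) = antiC u hu f - antiC u hu g := by
  have : f - g = f + (-1 : ℂ) • g := by simp [sub_eq_add_neg]
  rw [this, antiC_add, antiC_smul]
  simp [sub_eq_add_neg]

lemma antiC_continuous (u : UnitAddCircle →ₘ[μ] ℂ) (hu : ∀ᵐ x ∂μ, ‖u x‖ = 1) :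
    Continuous (antiC u hu) := by
  have : Isometry (antiC u hu) := by
    refine Isometry.of_dist_eq fun f g => ?_
    rw [dist_eq_norm, dist_eq_norm, ← antiC_sub, antiC_norm]
  exact this.continuous

lemma fourierLp_mem_H2 {n : ℤ} (hn : 0 ≤ n) : (fourierLp 2 n : L2) ∈ H2 := by
  apply Submodule.le_topologicalClosure
  apply Submodule.subset_span
  refine ⟨n.toNat, ?_⟩
  simp only [Int.toNat_of_nonneg hn]

lemma fourierLp_neg_mem_orth {n : ℤ} (hn : n < 0) : (fourierLp 2 n : L2) ∈ H2ᗮ := by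
  rw [Submodule.mem_orthogonal]
  intro v hv
  have hker : H2 ≤ LinearMap.ker (innerSL ℂ (fourierLp 2 n : L2) : L2 →ₗ[ℂ] ℂ) := by
    apply Submodule.topologicalClosure_minimal
    · rw [Submodule.span_le]
      rintro _ ⟨m, rfl⟩
      simp only [SetLike.mem_coe, LinearMap.mem_ker]
      show inner (𝕜 := ℂ) (fourierLp 2 n : L2) (fourierLp 2 (m : ℤ) : L2) = 0
      exact orthonormal_fourier.2 (by omega)
    · exact ContinuousLinearMap.isClosed_ker _
  have h1 : inner (𝕜 := ℂ) (fourierLp 2 n : L2) v = 0 := hker hv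
  rw [← inner_conj_symm, h1, map_zero]

end Aux2
section Aux3

lemma antiC_zero (u : UnitAddCircle →ₘ[μ] ℂ) (hu : ∀ᵐ x ∂μ, ‖u x‖ = 1) :
    antiC u hu 0 = 0 := by
  have := antiC_smul u hu 0 0
  simpa using this

lemma antiC_fourierLp (m : ℤ) :
    antiC zbar hz_unimod (fourierLp 2 m : L2) = (fourierLp 2 (-m - 1) : L2) := by
  refine Lp.ext ?_
  filter_upwards [antiC_coeFn zbar hz_unimod (fourierLp 2 m), zbar_coeFn,
    coeFn_fourierLp (T := 1) 2 m, coeFn_fourierLp (T := 1) 2 (-m - 1)] with x h1 h2 h3 h4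
  rw [h1, h4, h3, h2]
  calc fourier (T := 1) (-1) x * (starRingEnd ℂ) (fourier m x)
      = fourier (-1) x * fourier (-m) x := by rw [← fourier_neg]
    _ = fourier (-1 + -m) x := (fourier_add).symm
    _ = fourier (-m - 1) x := by congr 1; ring

lemma mem_H2_of_coeffs {x : L2}
    (hx : ∀ n : ℤ, n < 0 → inner (𝕜 := ℂ) (fourierLp 2 n : L2) x = 0) : x ∈ H2 := by
  haveI : CompleteSpace H2 := (Submodule.isClosed_topologicalClosure _).completeSpace_coe
  rw [← Submodule.orthogonal_orthogonal H2, Submodule.mem_orthogonal]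
  intro y hy
  have hrepr : inner (𝕜 := ℂ) y x
      = inner (𝕜 := ℂ) (fourierBasis.repr y) (fourierBasis.repr x) :=
    (fourierBasis.repr.inner_map_map y x).symm
  rw [hrepr, lp.inner_eq_tsum]
  have hterm : ∀ n : ℤ,
      inner (𝕜 := ℂ) (fourierBasis.repr y n) (fourierBasis.repr x n) = 0 := by
    intro n
    rcases lt_or_ge n 0 with hn | hn
    · have : fourierBasis.repr x n = 0 := by
        rw [fourierBasis.repr_apply_apply, coe_fourierBasis]
        exact hx n hn
      rw [this]
      simp
    · have : fourierBasis.repr y n = 0 := by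
        rw [fourierBasis.repr_apply_apply, coe_fourierBasis]
        exact (Submodule.mem_orthogonal H2 y).mp hy _ (fourierLp_mem_H2 hn)
      rw [this]
      simp
  rw [tsum_congr hterm]
  simp

lemma antiC_zbar_mem_orth {h : L2} (hh : h ∈ H2) : antiC zbar hz_unimod h ∈ H2ᗮ := by
  have key : (H2 : Set L2) ⊆ (antiC zbar hz_unimod) ⁻¹' (H2ᗮ : Set L2) := by
    have hclosed : IsClosed ((antiC zbar hz_unimod) ⁻¹' (H2ᗮ : Set L2)) :=
      (Submodule.isClosed_orthogonal H2).preimage (antiC_continuous _ _)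
    have hcoe : (H2 : Set L2) = closure
        ((Submodule.span ℂ (Set.range fun n : ℕ => (fourierLp 2 (n : ℤ) : L2))) : Set L2) :=
      Submodule.topologicalClosure_coe _
    rw [hcoe]
    refine closure_minimal ?_ hclosed
    intro v hv
    simp only [Set.mem_preimage, SetLike.mem_coe] at *
    induction hv using Submodule.span_induction with
    | mem w hw =>
        obtain ⟨n, rfl⟩ := hw
        rw [antiC_fourierLp]
        exact fourierLp_neg_mem_orth (by omega)
    | zero => rw [antiC_zero]; exact Submodule.zero_mem _
    | add a b _ _ ha hb => rw [antiC_add]; exact Submodule.add_mem _ ha hb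
    | smul c a _ ha => rw [antiC_smul]; exact Submodule.smul_mem _ _ ha
  exact key hh

end Aux3
section Aux4

lemma conj_inner_fourier_antiC (θ : UnitAddCircle →ₘ[μ] ℂ)
    (hθu : ∀ᵐ x ∂μ, ‖θ x‖ = 1) (hθz : ∀ᵐ x ∂μ, ‖(θ * zbar) x‖ = 1) (k : L2) (n : ℤ) :
    (starRingEnd ℂ) (inner (𝕜 := ℂ) (fourierLp 2 n : L2) (antiC (θ * zbar) hθz k))
      = inner (𝕜 := ℂ) (mulOp θ hθu (fourierLp 2 (-n - 1) : L2)) k := by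
  rw [MeasureTheory.L2.inner_def, MeasureTheory.L2.inner_def, ← integral_conj]
  refine integral_congr_ae ?_
  filter_upwards [coeFn_fourierLp (T := 1) 2 n, antiC_coeFn (θ * zbar) hθz k,
    AEEqFun.coeFn_mul θ zbar, zbar_coeFn, mulOp_coeFn θ hθu (fourierLp 2 (-n - 1)),
    coeFn_fourierLp (T := 1) 2 (-n - 1)] with x h1 h2 h3 h4 h5 h6
  rw [RCLike.inner_apply, RCLike.inner_apply, h1, h2, h5, h6, h3, Pi.mul_apply, h4]
  have e1 : (starRingEnd ℂ) (fourier (T := 1) (-1) x) = fourier 1 x := by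
    rw [← fourier_neg]; norm_num
  have e2 : (starRingEnd ℂ) (fourier (T := 1) (-n - 1) x) = fourier (n + 1) x := by
    rw [← fourier_neg]; congr 1; ring
  have e3 : fourier (T := 1) n x * fourier 1 x = fourier (n + 1) x := fourier_add.symm
  simp only [map_mul, Complex.conj_conj, e1, e2]
  linear_combination ((starRingEnd ℂ) (θ x) * k x) * e3

lemma inner_mulOp_antiC (θ : UnitAddCircle →ₘ[μ] ℂ)
    (hθu : ∀ᵐ x ∂μ, ‖θ x‖ = 1) (hθz : ∀ᵐ x ∂μ, ‖(θ * zbar) x‖ = 1) (h k : L2) :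
    inner (𝕜 := ℂ) (mulOp θ hθu h) (antiC (θ * zbar) hθz k)
      = (starRingEnd ℂ) (inner (𝕜 := ℂ) (antiC zbar hz_unimod h) k) := by
  rw [MeasureTheory.L2.inner_def, MeasureTheory.L2.inner_def, ← integral_conj]
  refine integral_congr_ae ?_
  filter_upwards [mulOp_coeFn θ hθu h, antiC_coeFn (θ * zbar) hθz k,
    AEEqFun.coeFn_mul θ zbar, antiC_coeFn zbar hz_unimod h, hθu] with x h1 h2 h3 h4 h5
  rw [RCLike.inner_apply, RCLike.inner_apply, h1, h2, h4, h3, Pi.mul_apply]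
  have e1 := conj_mul_self_one h5
  simp only [map_mul, Complex.conj_conj]
  linear_combination ((starRingEnd ℂ) (h x) * zbar x * (starRingEnd ℂ) (k x)) * e1

lemma antiC_mem_modelSpace (θ : UnitAddCircle →ₘ[μ] ℂ)
    (hθu : ∀ᵐ x ∂μ, ‖θ x‖ = 1) (hθz : ∀ᵐ x ∂μ, ‖(θ * zbar) x‖ = 1) {k : L2}
    (hk : k ∈ modelSpace θ hθu) : antiC (θ * zbar) hθz k ∈ modelSpace θ hθu := by
  have hk1 : k ∈ H2 := hk.1
  have hk2 : k ∈ (H2.map (mulOp θ hθu))ᗮ := hk.2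
  refine Submodule.mem_inf.mpr ⟨?_, ?_⟩
  · refine mem_H2_of_coeffs fun n hn => ?_
    have h1 := conj_inner_fourier_antiC θ hθu hθz k n
    have hmem : mulOp θ hθu (fourierLp 2 (-n - 1) : L2) ∈ H2.map (mulOp θ hθu) :=
      Submodule.mem_map_of_mem (fourierLp_mem_H2 (by omega))
    have h0 : inner (𝕜 := ℂ) (mulOp θ hθu (fourierLp 2 (-n - 1) : L2)) k = 0 :=
      (Submodule.mem_orthogonal _ _).mp hk2 _ hmem
    have := h1.trans h0
    have h2 := congrArg (starRingEnd ℂ) this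
    simpa using h2
  · rw [Submodule.mem_orthogonal]
    rintro u hu
    obtain ⟨h, hh, rfl⟩ := hu
    rw [inner_mulOp_antiC]
    have h0 : inner (𝕜 := ℂ) (antiC zbar hz_unimod h) k = 0 :=
      Submodule.inner_left_of_mem_orthogonal hk1 (antiC_zbar_mem_orth hh)
    rw [h0, map_zero]

end Aux4
/-- Let M = φK_θ ⊕ ψK_θ be an orthogonal direct sum in L² with θ inner and
φ, ψ unimodular.  The antilinear operator C_M f = θφψz̄f̄ is a conjugation on L²
(an antilinear isometric involution) and it maps M into M. -/
theorem statement2 (θ φ ψ : UnitAddCircle →ₘ[μ] ℂ)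
    (hθu : ∀ᵐ x ∂μ, ‖θ x‖ = 1)
    (hθinner : ∀ f ∈ H2, mulOp θ hθu f ∈ H2)
    (hφ : ∀ᵐ x ∂μ, ‖φ x‖ = 1) (hψ : ∀ᵐ x ∂μ, ‖ψ x‖ = 1)
    (horth : ((modelSpace θ hθu).map (mulOp φ hφ)) ⟂ ((modelSpace θ hθu).map (mulOp ψ hψ)))
    (hprod : ∀ᵐ x ∂μ, ‖(θ * φ * ψ * zbar) x‖ = 1) :
    -- C_M is antilinear
    (∀ f g : L2, mulOp (θ * φ * ψ * zbar) hprod (conjL2 (f + g))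
        = mulOp (θ * φ * ψ * zbar) hprod (conjL2 f)
          + mulOp (θ * φ * ψ * zbar) hprod (conjL2 g)) ∧
    (∀ (c : ℂ) (f : L2), mulOp (θ * φ * ψ * zbar) hprod (conjL2 (c • f))
        = (starRingEnd ℂ c) • mulOp (θ * φ * ψ * zbar) hprod (conjL2 f)) ∧
    -- C_M is an involution
    (∀ f : L2, mulOp (θ * φ * ψ * zbar) hprod
        (conjL2 (mulOp (θ * φ * ψ * zbar) hprod (conjL2 f))) = f) ∧
    -- C_M is "isometric": ⟨C_M f, C_M g⟩ = ⟨g, f⟩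
    (∀ f g : L2, inner (𝕜 := ℂ) (mulOp (θ * φ * ψ * zbar) hprod (conjL2 f))
        (mulOp (θ * φ * ψ * zbar) hprod (conjL2 g)) = inner (𝕜 := ℂ) g f) ∧
    -- C_M preserves M = φK_θ ⊕ ψK_θ
    (∀ f : L2, (∃ k₁ ∈ modelSpace θ hθu, ∃ k₂ ∈ modelSpace θ hθu,
          f = mulOp φ hφ k₁ + mulOp ψ hψ k₂) →
      (∃ k₁ ∈ modelSpace θ hθu, ∃ k₂ ∈ modelSpace θ hθu,
          mulOp (θ * φ * ψ * zbar) hprod (conjL2 f) = mulOp φ hφ k₁ + mulOp ψ hψ k₂)) := by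
  have hθz : ∀ᵐ x ∂μ, ‖(θ * zbar) x‖ = 1 := by
    filter_upwards [AEEqFun.coeFn_mul θ zbar, hθu, hz_unimod] with x h1 h2 h3
    rw [h1, Pi.mul_apply, norm_mul, h2, h3, mul_one]
  refine ⟨fun f g => antiC_add _ hprod f g, fun c f => antiC_smul _ hprod c f, ?_, 
    fun f g => antiC_inner _ hprod f g, ?_⟩
  · intro f
    show antiC _ hprod (antiC _ hprod f) = f
    refine Lp.ext ?_
    filter_upwards [antiC_coeFn _ hprod (antiC _ hprod f), antiC_coeFn _ hprod f, hprod]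
      with x h1 h2 h3
    rw [h1, h2]
    have e1 := conj_mul_self_one h3
    simp only [map_mul, Complex.conj_conj]
    linear_combination (f x) * e1
  · rintro f ⟨k₁, hk₁, k₂, hk₂, rfl⟩
    refine ⟨antiC (θ * zbar) hθz k₂, antiC_mem_modelSpace θ hθu hθz hk₂,
      antiC (θ * zbar) hθz k₁, antiC_mem_modelSpace θ hθu hθz hk₁, ?_⟩
    show antiC _ hprod _ = _
    refine Lp.ext ?_
    filter_upwards [antiC_coeFn _ hprod (mulOp φ hφ k₁ + mulOp ψ hψ k₂),
      Lp.coeFn_add (mulOp φ hφ k₁) (mulOp ψ hψ k₂),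
      mulOp_coeFn φ hφ k₁, mulOp_coeFn ψ hψ k₂,
      AEEqFun.coeFn_mul (θ * φ * ψ) zbar, AEEqFun.coeFn_mul (θ * φ) ψ,
      AEEqFun.coeFn_mul θ φ, AEEqFun.coeFn_mul θ zbar,
      mulOp_coeFn φ hφ (antiC (θ * zbar) hθz k₂), mulOp_coeFn ψ hψ (antiC (θ * zbar) hθz k₁),
      antiC_coeFn (θ * zbar) hθz k₂, antiC_coeFn (θ * zbar) hθz k₁,
      Lp.coeFn_add (mulOp φ hφ (antiC (θ * zbar) hθz k₂)) (mulOp ψ hψ (antiC (θ * zbar) hθz k₁)),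
      hφ, hψ]
      with x h1 h2 h3 h4 h5 h6 h7 h8 h9 h10 h11 h12 h13 h14 h15
    rw [h1, h13, Pi.add_apply, h9, h10, h11, h12, h2, Pi.add_apply, h3, h4,
      h5, Pi.mul_apply, h6, Pi.mul_apply, h7, Pi.mul_apply, h8, Pi.mul_apply]
    have e1 := conj_mul_self_one h14
    have e2 := conj_mul_self_one h15
    simp only [map_add, map_mul]
    linear_combination (θ x * zbar x * ψ x * (starRingEnd ℂ) (k₁ x)) * e1
      + (θ x * zbar x * φ x * (starRingEnd ℂ) (k₂ x)) * e2
end DualBand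
end
end

section
/- Let θ be an inner function, λ ∈ 𝕋, and suppose there exist a ∈ ℂ with |a| = 1 and h ∈ H² with θ(z) − a = (z − λ)h(z) on 𝔻. Then θ has nontangential limit a at λ; that is, θ(z) → a as z → λ nontangentially in 𝔻. -/
open Filter Complex

/-- Cauchy–Schwarz for nonnegative series. -/
lemma tsum_mul_le_sqrt_mul_sqrt (f g : ℕ → ℝ) (hf0 : ∀ n, 0 ≤ f n) (hg0 : ∀ n, 0 ≤ g n)
    (hf : Summable fun n => f n ^ 2) (hg : Summable fun n => g n ^ 2) :
    (∑' n, f n * g n) ≤ Real.sqrt (∑' n, f n ^ 2) * Real.sqrt (∑' n, g n ^ 2) := by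
  have hfg : Summable fun n => f n * g n := by
    apply Summable.of_nonneg_of_le (fun n => mul_nonneg (hf0 n) (hg0 n))
      (fun n => ?_) ((hf.add hg).div_const 2)
    have := sq_nonneg (f n - g n)
    nlinarith
  refine Summable.tsum_le_of_sum_le hfg fun s => ?_
  have h1 : (∑ i ∈ s, f i * g i) ^ 2 ≤ (∑ i ∈ s, f i ^ 2) * ∑ i ∈ s, g i ^ 2 :=
    Finset.sum_mul_sq_le_sq_mul_sq s f g
  have h2 : (∑ i ∈ s, f i ^ 2) ≤ ∑' n, f n ^ 2 :=
    Summable.sum_le_tsum s (fun n _ => sq_nonneg _) hf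
  have h3 : (∑ i ∈ s, g i ^ 2) ≤ ∑' n, g n ^ 2 :=
    Summable.sum_le_tsum s (fun n _ => sq_nonneg _) hg
  have hs : 0 ≤ ∑ i ∈ s, f i * g i :=
    Finset.sum_nonneg fun n _ => mul_nonneg (hf0 n) (hg0 n)
  have := Real.sqrt_le_sqrt (h1.trans (mul_le_mul h2 h3 (Finset.sum_nonneg fun n _ => sq_nonneg _)
    ((Summable.sum_le_tsum s (fun n _ => sq_nonneg _) hf).trans' (Finset.sum_nonneg fun n _ => sq_nonneg _))))
  rwa [Real.sqrt_sq hs, Real.sqrt_mul (le_trans (Finset.sum_nonneg fun n _ => sq_nonneg _) h2)]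
    at this

/-- Let θ be inner (holomorphic and bounded by 1 on 𝔻), λ ∈ 𝕋, and suppose
there are a ∈ ℂ with |a| = 1 and h ∈ H² (square-summable Taylor coefficients `b`) with
θ(z) − a = (z − λ)h(z) on 𝔻.  Then θ(z) → a as z → λ nontangentially in 𝔻. -/
theorem statement9 (θ : ℂ → ℂ)
    (hθan : DifferentiableOn ℂ θ (Metric.ball (0 : ℂ) 1))
    (hθb : ∀ z : ℂ, ‖z‖ < 1 → ‖θ z‖ ≤ 1)
    (lam : ℂ) (hlam : ‖lam‖ = 1)
    (a : ℂ) (ha : ‖a‖ = 1)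
    (b : ℕ → ℂ) (hb : Summable fun n => ‖b n‖ ^ 2)
    (h : ℂ → ℂ) (hh : ∀ z : ℂ, ‖z‖ < 1 → h z = ∑' n : ℕ, b n * z ^ n)
    (hfact : ∀ z : ℂ, ‖z‖ < 1 → θ z - a = (z - lam) * h z) :
    ∀ C : ℝ, 0 < C →
      Tendsto θ (nhdsWithin lam {z : ℂ | ‖z‖ < 1 ∧ ‖z - lam‖ ≤ C * (1 - ‖z‖)}) (nhds a) := by
  intro C hC
  set B : ℝ := Real.sqrt (∑' n, ‖b n‖ ^ 2) with hB
  have hB0 : 0 ≤ B := Real.sqrt_nonneg _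
  -- key pointwise bound on the set
  have key : ∀ z : ℂ, ‖z‖ < 1 → ‖z - lam‖ ≤ C * (1 - ‖z‖) →
      ‖θ z - a‖ ≤ C * B * Real.sqrt ‖z - lam‖ := by
    intro z hz1 hz2
    set r : ℝ := ‖z‖ with hr
    have hr0 : 0 ≤ r := norm_nonneg z
    have hr2 : r ^ 2 < 1 := by nlinarith
    -- geometric series
    have heq : ∀ n : ℕ, (r ^ n) ^ 2 = (r ^ 2) ^ n := fun n => by ring
    have hgeo : Summable fun n : ℕ => (r ^ n) ^ 2 := by
      simp_rw [heq]
      exact summable_geometric_of_lt_one (by positivity) hr2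
    -- bound on h z
    have hsum : Summable fun n : ℕ => ‖b n * z ^ n‖ := by
      simp_rw [norm_mul, norm_pow]
      apply Summable.of_nonneg_of_le (fun n => by positivity) (fun n => ?_)
        ((hb.add hgeo).div_const 2)
      have := sq_nonneg (‖b n‖ - r ^ n)
      nlinarith
    have hhz : ‖h z‖ ≤ B * Real.sqrt (∑' n : ℕ, (r ^ n) ^ 2) := by
      rw [hh z hz1]
      calc ‖∑' n : ℕ, b n * z ^ n‖ ≤ ∑' n : ℕ, ‖b n * z ^ n‖ := norm_tsum_le_tsum_norm hsum
        _ = ∑' n : ℕ, ‖b n‖ * r ^ n := by simp_rw [norm_mul, norm_pow, ← hr]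
        _ ≤ B * Real.sqrt (∑' n : ℕ, (r ^ n) ^ 2) :=
            tsum_mul_le_sqrt_mul_sqrt _ _ (fun n => norm_nonneg _) (fun n => by positivity) hb hgeo
    -- evaluate geometric sum
    have hgval : (∑' n : ℕ, (r ^ n) ^ 2) = 1 / (1 - r ^ 2) := by
      simp_rw [heq]
      rw [tsum_geometric_of_lt_one (by positivity) hr2, one_div]
    have h1r2 : (0:ℝ) < 1 - r ^ 2 := by linarith
    -- (1 - r) * sqrt (1/(1-r^2)) ≤ sqrt (1 - r)
    have hstep : (1 - r) * Real.sqrt (1 / (1 - r ^ 2)) ≤ Real.sqrt (1 - r) := by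
      have e : (1 - r) * Real.sqrt (1 / (1 - r ^ 2))
          = Real.sqrt ((1 - r) ^ 2 * (1 / (1 - r ^ 2))) := by
        rw [Real.sqrt_mul (sq_nonneg _), Real.sqrt_sq (by linarith : (0:ℝ) ≤ 1 - r)]
      rw [e]
      apply Real.sqrt_le_sqrt
      rw [mul_one_div, div_le_iff₀ h1r2]
      nlinarith [sq_nonneg (1 - r), mul_nonneg (sq_nonneg (1 - r)) hr0]
    have hfz : ‖θ z - a‖ = ‖z - lam‖ * ‖h z‖ := by rw [hfact z hz1, norm_mul]
    have h1r : 1 - r ≤ ‖z - lam‖ := by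
      have := norm_sub_norm_le lam z
      rw [hlam, norm_sub_rev] at this
      linarith
    calc ‖θ z - a‖ = ‖z - lam‖ * ‖h z‖ := hfz
      _ ≤ (C * (1 - r)) * (B * Real.sqrt (1 / (1 - r ^ 2))) := by
          rw [← hgval]
          exact mul_le_mul hz2 hhz (norm_nonneg _) (by nlinarith)
      _ = C * B * ((1 - r) * Real.sqrt (1 / (1 - r ^ 2))) := by ring
      _ ≤ C * B * Real.sqrt (1 - r) := by
          apply mul_le_mul_of_nonneg_left hstep (by positivity)
      _ ≤ C * B * Real.sqrt ‖z - lam‖ := by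
          apply mul_le_mul_of_nonneg_left (Real.sqrt_le_sqrt h1r) (by positivity)
  -- conclude by squeeze
  rw [tendsto_iff_norm_sub_tendsto_zero]
  apply squeeze_zero' (Eventually.of_forall fun z => norm_nonneg _)
  · filter_upwards [self_mem_nhdsWithin] with z hz
    exact key z hz.1 hz.2
  · have h1 : Tendsto (fun z : ℂ => ‖z - lam‖) (nhdsWithin lam {z : ℂ | ‖z‖ < 1 ∧ ‖z - lam‖ ≤ C * (1 - ‖z‖)}) (nhds 0) := by
      have : Tendsto (fun z : ℂ => ‖z - lam‖) (nhds lam) (nhds ‖lam - lam‖) :=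
        (continuous_norm.comp (continuous_id.sub continuous_const)).tendsto lam
      simpa using this.mono_left nhdsWithin_le_nhds
    have h2 : Tendsto (fun z : ℂ => C * B * Real.sqrt ‖z - lam‖)
        (nhdsWithin lam {z : ℂ | ‖z‖ < 1 ∧ ‖z - lam‖ ≤ C * (1 - ‖z‖)}) (nhds (C * B * Real.sqrt 0)) :=
      (Real.continuous_sqrt.tendsto 0).comp h1 |>.const_mul _
    simpa using h2
end

section
/- Let X, X̃, Y, Ỹ be Banach spaces and T : X → X̃, S : Y → Ỹ bounded operators equivalent after extension. Then T is invertible if and only if S is invertible, and T is Fredholm if and only if S is Fredholm, in which case they have equal Fredholm index. -/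
open Module

/-- A bounded operator between Banach spaces is Fredholm if it has finite-dimensional kernel,
closed range and finite-dimensional cokernel. -/
def IsFredholmOp {X Y : Type*}
    [NormedAddCommGroup X] [NormedSpace ℂ X] [NormedAddCommGroup Y] [NormedSpace ℂ Y]
    (T : X →L[ℂ] Y) : Prop :=
  FiniteDimensional ℂ (LinearMap.ker (T : X →ₗ[ℂ] Y)) ∧ IsClosed (LinearMap.range (T : X →ₗ[ℂ] Y) : Set Y) ∧
    FiniteDimensional ℂ (Y ⧸ LinearMap.range (T : X →ₗ[ℂ] Y))

/-- The Fredholm index: dim ker − dim coker. -/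
noncomputable def fredholmIndex {X Y : Type*}
    [NormedAddCommGroup X] [NormedSpace ℂ X] [NormedAddCommGroup Y] [NormedSpace ℂ Y]
    (T : X →L[ℂ] Y) : ℤ :=
  (finrank ℂ (LinearMap.ker (T : X →ₗ[ℂ] Y)) : ℤ) - (finrank ℂ (Y ⧸ LinearMap.range (T : X →ₗ[ℂ] Y)) : ℤ)

section prodAux
variable {X Xt X0 : Type*}
  [NormedAddCommGroup X] [NormedSpace ℂ X]
  [NormedAddCommGroup Xt] [NormedSpace ℂ Xt]
  [NormedAddCommGroup X0] [NormedSpace ℂ X0]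

lemma mem_ker_prodMap {T : X →L[ℂ] Xt} {v : X × X0} :
    v ∈ LinearMap.ker (T.prodMap (ContinuousLinearMap.id ℂ X0) : X × X0 →ₗ[ℂ] Xt × X0) ↔ T v.1 = 0 ∧ v.2 = 0 := by
  simp [LinearMap.mem_ker, Prod.ext_iff]

lemma mem_range_prodMap {T : X →L[ℂ] Xt} {v : Xt × X0} :
    v ∈ LinearMap.range (T.prodMap (ContinuousLinearMap.id ℂ X0) : X × X0 →ₗ[ℂ] Xt × X0) ↔
      v.1 ∈ LinearMap.range (T : X →ₗ[ℂ] Xt) := by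
  constructor
  · rintro ⟨a, rfl⟩; exact ⟨a.1, rfl⟩
  · rintro ⟨a, ha⟩
    exact ⟨(a, v.2), by simp [Prod.ext_iff, ha]⟩

noncomputable def kerProdEquiv (T : X →L[ℂ] Xt) :
    LinearMap.ker (T.prodMap (ContinuousLinearMap.id ℂ X0) : X × X0 →ₗ[ℂ] Xt × X0) ≃ₗ[ℂ] LinearMap.ker (T : X →ₗ[ℂ] Xt) where
  toFun y := ⟨y.1.1, LinearMap.mem_ker.mpr (mem_ker_prodMap.mp y.2).1⟩
  map_add' _ _ := rfl
  map_smul' _ _ := rfl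
  invFun x := ⟨(x.1, 0), mem_ker_prodMap.mpr ⟨LinearMap.mem_ker.mp x.2, rfl⟩⟩
  left_inv y := Subtype.ext (Prod.ext rfl ((mem_ker_prodMap.mp y.2).2).symm)
  right_inv x := rfl

noncomputable def cokerProdEquiv (T : X →L[ℂ] Xt) :
    ((Xt × X0) ⧸ LinearMap.range (T.prodMap (ContinuousLinearMap.id ℂ X0) : X × X0 →ₗ[ℂ] Xt × X0)) ≃ₗ[ℂ]
      (Xt ⧸ LinearMap.range (T : X →ₗ[ℂ] Xt)) := by
  let f : (Xt × X0) →ₗ[ℂ] Xt ⧸ LinearMap.range (T : X →ₗ[ℂ] Xt) :=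
    (Submodule.mkQ _).comp (LinearMap.fst ℂ Xt X0)
  have hker : LinearMap.range (T.prodMap (ContinuousLinearMap.id ℂ X0) : X × X0 →ₗ[ℂ] Xt × X0) = LinearMap.ker f := by
    ext v
    simp [f, LinearMap.mem_ker, Submodule.Quotient.mk_eq_zero, mem_range_prodMap, Prod.ext_iff]
  have hsurj : Function.Surjective f :=
    (Submodule.mkQ_surjective _).comp (fun x => ⟨(x, 0), rfl⟩)
  exact (Submodule.quotEquivOfEq _ _ hker).trans (f.quotKerEquivOfSurjective hsurj)

lemma isClosed_range_prodMap_iff (T : X →L[ℂ] Xt) :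
    IsClosed (LinearMap.range (T.prodMap (ContinuousLinearMap.id ℂ X0) : X × X0 →ₗ[ℂ] Xt × X0) : Set (Xt × X0)) ↔
      IsClosed (LinearMap.range (T : X →ₗ[ℂ] Xt) : Set Xt) := by
  have hset : (LinearMap.range (T.prodMap (ContinuousLinearMap.id ℂ X0) : X × X0 →ₗ[ℂ] Xt × X0) : Set (Xt × X0))
      = (LinearMap.range (T : X →ₗ[ℂ] Xt) : Set Xt) ×ˢ Set.univ := by
    ext v
    simpa [Set.mem_prod] using (mem_range_prodMap (T := T) (v := v))
  rw [hset]
  constructor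
  · intro h
    have hpre : (LinearMap.range (T : X →ₗ[ℂ] Xt) : Set Xt)
        = (fun x : Xt => (x, (0 : X0))) ⁻¹' ((LinearMap.range (T : X →ₗ[ℂ] Xt) : Set Xt) ×ˢ Set.univ) := by
      ext x; simp
    rw [hpre]
    exact h.preimage (by fun_prop)
  · intro h; exact h.prod isClosed_univ

end prodAux

section invAux
variable {X Xt : Type*}
  [NormedAddCommGroup X] [NormedSpace ℂ X] [CompleteSpace X]
  [NormedAddCommGroup Xt] [NormedSpace ℂ Xt] [CompleteSpace Xt]

lemma exists_inv_iff_bijective (T : X →L[ℂ] Xt) :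
    (∃ T' : Xt →L[ℂ] X, T'.comp T = ContinuousLinearMap.id ℂ X ∧
        T.comp T' = ContinuousLinearMap.id ℂ Xt) ↔ Function.Bijective T := by
  constructor
  · rintro ⟨T', h1, h2⟩
    constructor
    · intro a b hab
      have ha := ContinuousLinearMap.ext_iff.mp h1 a
      have hb := ContinuousLinearMap.ext_iff.mp h1 b
      simp only [ContinuousLinearMap.comp_apply, ContinuousLinearMap.id_apply] at ha hb
      rw [← ha, ← hb, hab]
    · intro y
      have hy := ContinuousLinearMap.ext_iff.mp h2 y
      simp only [ContinuousLinearMap.comp_apply, ContinuousLinearMap.id_apply] at hy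
      exact ⟨T' y, hy⟩
  · intro h
    have hinj : LinearMap.ker (T : X →ₗ[ℂ] Xt) = ⊥ := LinearMap.ker_eq_bot.mpr h.1
    have hsurj : LinearMap.range (T : X →ₗ[ℂ] Xt) = ⊤ := LinearMap.range_eq_top.mpr h.2
    let e := ContinuousLinearEquiv.ofBijective T hinj hsurj
    refine ⟨e.symm.toContinuousLinearMap, ?_, ?_⟩
    · ext x
      simp [e, ContinuousLinearEquiv.ofBijective_symm_apply_apply]
    · ext y
      simp only [ContinuousLinearMap.comp_apply, ContinuousLinearMap.id_apply,
        ContinuousLinearEquiv.coe_coe]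
      have : T (e.symm y) = e (e.symm y) := by
        rw [ContinuousLinearEquiv.coeFn_ofBijective]
      rw [this, e.apply_symm_apply]

end invAux

lemma transfer
    {X Xt Y Yt X0 Y0 : Type*}
    [NormedAddCommGroup X] [NormedSpace ℂ X]
    [NormedAddCommGroup Xt] [NormedSpace ℂ Xt]
    [NormedAddCommGroup Y] [NormedSpace ℂ Y]
    [NormedAddCommGroup Yt] [NormedSpace ℂ Yt]
    [NormedAddCommGroup X0] [NormedSpace ℂ X0]
    [NormedAddCommGroup Y0] [NormedSpace ℂ Y0]
    (T : X →L[ℂ] Xt) (S : Y →L[ℂ] Yt)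
    (E : (Yt × Y0) ≃L[ℂ] (Xt × X0)) (F : (X × X0) ≃L[ℂ] (Y × Y0))
    (heq : T.prodMap (ContinuousLinearMap.id ℂ X0)
      = ((E : (Yt × Y0) →L[ℂ] (Xt × X0)).comp
          (S.prodMap (ContinuousLinearMap.id ℂ Y0))).comp
            (F : (X × X0) →L[ℂ] (Y × Y0))) :
    Nonempty (LinearMap.ker (T : X →ₗ[ℂ] Xt) ≃ₗ[ℂ] LinearMap.ker (S : Y →ₗ[ℂ] Yt)) ∧
    (IsClosed (LinearMap.range (T : X →ₗ[ℂ] Xt) : Set Xt) ↔ IsClosed (LinearMap.range (S : Y →ₗ[ℂ] Yt) : Set Yt)) ∧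
    Nonempty ((Xt ⧸ LinearMap.range (T : X →ₗ[ℂ] Xt)) ≃ₗ[ℂ] (Yt ⧸ LinearMap.range (S : Y →ₗ[ℂ] Yt))) := by
  set A := T.prodMap (ContinuousLinearMap.id ℂ X0) with hA
  set B := S.prodMap (ContinuousLinearMap.id ℂ Y0) with hB
  have happ : ∀ v, A v = E (B (F v)) := by
    intro v; rw [heq]; rfl
  -- kernels
  have hker : LinearMap.ker (A : X × X0 →ₗ[ℂ] Xt × X0)
      = Submodule.comap (F.toLinearEquiv : (X × X0) →ₗ[ℂ] (Y × Y0)) (LinearMap.ker (B : Y × Y0 →ₗ[ℂ] Yt × Y0)) := by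
    ext v
    simp [LinearMap.mem_ker, happ v]
  have eker : (LinearMap.ker (T : X →ₗ[ℂ] Xt)) ≃ₗ[ℂ] (LinearMap.ker (S : Y →ₗ[ℂ] Yt)) :=
    ((kerProdEquiv T).symm.trans
      ((LinearEquiv.ofEq _ _ hker).trans
        (LinearEquiv.ofSubmodule' F.toLinearEquiv (LinearMap.ker (B : Y × Y0 →ₗ[ℂ] Yt × Y0))))).trans (kerProdEquiv S)
  -- ranges
  have hrange : Submodule.map (E.toLinearEquiv : (Yt × Y0) →ₗ[ℂ] (Xt × X0)) (LinearMap.range (B : Y × Y0 →ₗ[ℂ] Yt × Y0))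
      = LinearMap.range (A : X × X0 →ₗ[ℂ] Xt × X0) := by
    ext v
    simp only [Submodule.mem_map, LinearMap.mem_range, LinearEquiv.coe_coe,
      ContinuousLinearEquiv.coe_toLinearEquiv]
    constructor
    · rintro ⟨w, ⟨u, rfl⟩, rfl⟩
      exact ⟨F.symm u, by simp only [ContinuousLinearMap.coe_coe]; rw [happ, F.apply_symm_apply]⟩
    · rintro ⟨u, rfl⟩
      exact ⟨B (F u), ⟨F u, rfl⟩, (happ u).symm⟩
  have ecoker : ((Xt ⧸ LinearMap.range (T : X →ₗ[ℂ] Xt))) ≃ₗ[ℂ] ((Yt ⧸ LinearMap.range (S : Y →ₗ[ℂ] Yt))) :=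
    ((cokerProdEquiv T).symm.trans
      ((Submodule.Quotient.equiv (LinearMap.range (B : Y × Y0 →ₗ[ℂ] Yt × Y0)) (LinearMap.range (A : X × X0 →ₗ[ℂ] Xt × X0))
        E.toLinearEquiv hrange).symm)).trans (cokerProdEquiv S)
  refine ⟨⟨eker⟩, ?_, ⟨ecoker⟩⟩
  rw [← isClosed_range_prodMap_iff (X0 := X0) T, ← isClosed_range_prodMap_iff (X0 := Y0) S, ← hA, ← hB]
  have hset : (LinearMap.range (A : X × X0 →ₗ[ℂ] Xt × X0) : Set (Xt × X0)) = E '' (LinearMap.range (B : Y × Y0 →ₗ[ℂ] Yt × Y0) : Set (Yt × Y0)) := by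
    rw [← hrange]
    simp [Submodule.map_coe]
  rw [hset, ContinuousLinearEquiv.isClosed_image]

/-- If T and S are equivalent after extension, then T is invertible iff S is
invertible, and T is Fredholm iff S is Fredholm, in which case they have the same index. -/
theorem statement14
    {X Xt Y Yt X0 Y0 : Type*}
    [NormedAddCommGroup X] [NormedSpace ℂ X] [CompleteSpace X]
    [NormedAddCommGroup Xt] [NormedSpace ℂ Xt] [CompleteSpace Xt]
    [NormedAddCommGroup Y] [NormedSpace ℂ Y] [CompleteSpace Y]
    [NormedAddCommGroup Yt] [NormedSpace ℂ Yt] [CompleteSpace Yt]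
    [NormedAddCommGroup X0] [NormedSpace ℂ X0] [CompleteSpace X0]
    [NormedAddCommGroup Y0] [NormedSpace ℂ Y0] [CompleteSpace Y0]
    (T : X →L[ℂ] Xt) (S : Y →L[ℂ] Yt)
    (E : (Yt × Y0) ≃L[ℂ] (Xt × X0)) (F : (X × X0) ≃L[ℂ] (Y × Y0))
    (heq : T.prodMap (ContinuousLinearMap.id ℂ X0)
      = ((E : (Yt × Y0) →L[ℂ] (Xt × X0)).comp
          (S.prodMap (ContinuousLinearMap.id ℂ Y0))).comp
            (F : (X × X0) →L[ℂ] (Y × Y0))) :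
    ((∃ T' : Xt →L[ℂ] X, T'.comp T = ContinuousLinearMap.id ℂ X ∧
        T.comp T' = ContinuousLinearMap.id ℂ Xt) ↔
      (∃ S' : Yt →L[ℂ] Y, S'.comp S = ContinuousLinearMap.id ℂ Y ∧
        S.comp S' = ContinuousLinearMap.id ℂ Yt)) ∧
    (IsFredholmOp T ↔ IsFredholmOp S) ∧
    (IsFredholmOp T → fredholmIndex T = fredholmIndex S) := by
  obtain ⟨⟨eker⟩, hcl, ⟨ecoker⟩⟩ := transfer T S E F heq
  refine ⟨?_, ?_, ?_⟩
  · rw [exists_inv_iff_bijective, exists_inv_iff_bijective]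
    have hinj : Function.Injective T ↔ Function.Injective S := by
      rw [← ContinuousLinearMap.coe_coe T, ← ContinuousLinearMap.coe_coe S,
        ← LinearMap.ker_eq_bot, ← LinearMap.ker_eq_bot,
        ← Submodule.subsingleton_iff_eq_bot, ← Submodule.subsingleton_iff_eq_bot]
      exact eker.toEquiv.subsingleton_congr
    have hsurj : Function.Surjective T ↔ Function.Surjective S := by
      rw [← ContinuousLinearMap.coe_coe T, ← ContinuousLinearMap.coe_coe S,
        ← LinearMap.range_eq_top, ← LinearMap.range_eq_top,
        ← Submodule.Quotient.subsingleton_iff,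
        ← Submodule.Quotient.subsingleton_iff]
      exact ecoker.toEquiv.subsingleton_congr
    rw [Function.Bijective, Function.Bijective, hinj, hsurj]
  · constructor
    · rintro ⟨h1, h2, h3⟩
      exact ⟨eker.finiteDimensional, hcl.mp h2, ecoker.finiteDimensional⟩
    · rintro ⟨h1, h2, h3⟩
      exact ⟨eker.symm.finiteDimensional, hcl.mpr h2, ecoker.symm.finiteDimensional⟩
  · intro _
    unfold fredholmIndex
    rw [eker.finrank_eq, ecoker.finrank_eq]
end
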